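/- Let U ⊆ ℝ^n be an open convex set invariant under permutations of the coordinates, and let f : U → ℝ be a differentiable concave function that is invariant under permutations of the coordinates. If λ ∈ U and p, q are indices with λ_p ≤ λ_q, then ∂f/∂λ_p(λ) ≥ ∂f/∂λ_q(λ). In particular, if λ_1 ≤ λ_2 ≤ ⋯ ≤ λ_n then the partial derivatives satisfy f_1(λ) ≥ f_2(λ) ≥ ⋯ ≥ f_n(λ). -/

import Mathlib

/-- A differentiable concave function on an open convex permutation-invariant set,
itself invariant under permutations of the coordinates, has partial derivatives that
are antitone with respect to the ordering of the coordinates of the point. -/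
theorem concave_symmetric_partial_deriv_antitone (n : ℕ) (U : Set (Fin n → ℝ))
    (hUopen : IsOpen U) (hUconv : Convex ℝ U)
    (hUsymm : ∀ σ : Equiv.Perm (Fin n), ∀ x ∈ U, x ∘ σ ∈ U)
    (f : (Fin n → ℝ) → ℝ)
    (hdiff : ∀ x ∈ U, DifferentiableAt ℝ f x)
    (hconc : ConcaveOn ℝ U f)
    (hfsymm : ∀ σ : Equiv.Perm (Fin n), ∀ x ∈ U, f (x ∘ σ) = f x)
    (lam : Fin n → ℝ) (hlam : lam ∈ U) (p q : Fin n) (hpq : lam p ≤ lam q) :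
    fderiv ℝ f lam (Pi.single q 1) ≤ fderiv ℝ f lam (Pi.single p 1) := by
  set σ : Equiv.Perm (Fin n) := Equiv.swap p q with hσ
  rcases eq_or_lt_of_le hpq with heq | hlt
  · -- equality case: use symmetry
    rcases eq_or_ne p q with rfl | hne
    · exact le_refl _
    set L : (Fin n → ℝ) →L[ℝ] (Fin n → ℝ) :=
      ContinuousLinearMap.pi (fun i => ContinuousLinearMap.proj (σ i)) with hL
    have hLx : ∀ x : Fin n → ℝ, L x = x ∘ σ := fun x => rfl
    have hLlam : L lam = lam := by
      funext i
      show lam (σ i) = lam i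
      rcases eq_or_ne i p with rfl | hip
      · simp [hσ, Equiv.swap_apply_left, heq]
      rcases eq_or_ne i q with rfl | hiq
      · simp [hσ, Equiv.swap_apply_right, heq]
      · simp [hσ, Equiv.swap_apply_of_ne_of_ne hip hiq]
    have hev : (f ∘ L) =ᶠ[nhds lam] f := by
      filter_upwards [hUopen.mem_nhds hlam] with x hx
      simpa [hLx] using hfsymm σ x hx
    have hcomp : fderiv ℝ (f ∘ L) lam = (fderiv ℝ f lam).comp L := by
      have h1 : HasFDerivAt f (fderiv ℝ f lam) (L lam) := by
        rw [hLlam]; exact (hdiff lam hlam).hasFDerivAt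
      exact (h1.comp lam L.hasFDerivAt).fderiv
    have hfe : fderiv ℝ f lam (L (Pi.single p 1)) = fderiv ℝ f lam (Pi.single p 1) := by
      have := hev.fderiv_eq (𝕜 := ℝ)
      rw [hcomp] at this
      exact ContinuousLinearMap.ext_iff.mp this (Pi.single p 1)
    have hLsingle : L (Pi.single p 1) = Pi.single q 1 := by
      funext i
      show (Pi.single p 1 : Fin n → ℝ) (σ i) = (Pi.single q 1 : Fin n → ℝ) i
      rcases eq_or_ne i q with rfl | hiq
      · rw [hσ]
        rw [Equiv.swap_apply_right, Pi.single_eq_same, Pi.single_eq_same]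
      · have : σ i ≠ p := by
          intro h
          apply hiq
          have := σ.injective (a₁ := i) (a₂ := q)
          exact this (by rw [h, hσ, Equiv.swap_apply_right])
        simp [Pi.single_eq_of_ne this, Pi.single_eq_of_ne hiq]
    rw [hLsingle] at hfe
    exact le_of_eq hfe
  · -- strict case: concavity argument
    set v : Fin n → ℝ := Pi.single p 1 - Pi.single q 1 with hv
    set c : ℝ := lam q - lam p with hc
    have hcpos : 0 < c := sub_pos.mpr hlt
    have hμswap : lam + c • v = lam ∘ σ := by
      funext i
      show lam i + c * v i = lam (σ i)
      have hne : p ≠ q := fun h => lt_irrefl _ (h ▸ hlt)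
      rcases eq_or_ne i p with rfl | hip
      · simp [hv, hσ, Equiv.swap_apply_left, Pi.single_eq_same,
          Pi.single_eq_of_ne hne, hc]
      rcases eq_or_ne i q with rfl | hiq
      · simp [hv, hσ, Equiv.swap_apply_right, Pi.single_eq_same,
          Pi.single_eq_of_ne hne.symm, hc]
      · simp [hv, hσ, Equiv.swap_apply_of_ne_of_ne hip hiq,
          Pi.single_eq_of_ne hip, Pi.single_eq_of_ne hiq]
    have hμU : lam + c • v ∈ U := hμswap ▸ hUsymm σ lam hlam
    have hμf : f (lam + c • v) = f lam := by rw [hμswap]; exact hfsymm σ lam hlam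
    -- φ t = f (lam + t • v)
    have hg : HasDerivAt (fun t : ℝ => lam + t • v) v 0 := by
      simpa using ((hasDerivAt_id (0 : ℝ)).smul_const v).const_add lam
    have hf0 : HasFDerivAt f (fderiv ℝ f lam) (lam + (0 : ℝ) • v) := by
      simpa using (hdiff lam hlam).hasFDerivAt
    have hφ : HasDerivAt (fun t : ℝ => f (lam + t • v)) (fderiv ℝ f lam v) 0 :=
      hf0.comp_hasDerivAt 0 hg
    have hslope : Filter.Tendsto (slope (fun t : ℝ => f (lam + t • v)) 0)
        (nhdsWithin 0 (Set.Ioi 0)) (nhds (fderiv ℝ f lam v)) :=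
      (hasDerivAt_iff_tendsto_slope.mp hφ).mono_left
        (nhdsWithin_mono 0 (fun x hx => ne_of_gt hx))
    have hnonneg : 0 ≤ fderiv ℝ f lam v := by
      refine ge_of_tendsto hslope ?_
      filter_upwards [Ioc_mem_nhdsGT hcpos]
        with t ht
      have htc : 0 < t / c := div_pos ht.1 hcpos
      have htc1 : t / c ≤ 1 := (div_le_one hcpos).mpr ht.2
      have hmem : lam + t • v = (1 - t / c) • lam + (t / c) • (lam + c • v) := by
        funext i
        simp only [Pi.add_apply, Pi.smul_apply, smul_eq_mul]
        field_simp
        ring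
      have hge : f lam ≤ f (lam + t • v) := by
        rw [hmem]
        calc f lam = (1 - t / c) * f lam + (t / c) * f (lam + c • v) := by
              rw [hμf]; ring
          _ ≤ f ((1 - t / c) • lam + (t / c) • (lam + c • v)) :=
              hconc.2 hlam hμU (by linarith) (le_of_lt htc) (by ring)
      have : slope (fun t : ℝ => f (lam + t • v)) 0 t
          = (f (lam + t • v) - f lam) / t := by
        simp [slope_def_field]
      rw [this]
      exact div_nonneg (sub_nonneg.mpr hge) (le_of_lt ht.1)
    have : fderiv ℝ f lam v
        = fderiv ℝ f lam (Pi.single p 1) - fderiv ℝ f lam (Pi.single q 1) := by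
      rw [hv, map_sub]
    linarith [this ▸ hnonneg]
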